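/- arXiv:2203.09643 — 3 statements merged into one kernel-verified Lean document; each statement's English description precedes it below -/
import Mathlib

section
/- Busemann functions of lines in finite-dimensional normed spaces with C¹ norm are linear: let ‖·‖ be a norm on ℝⁿ that is C¹ away from the origin, and let γ(s) = s·v be a line through the origin with ‖v‖ = 1. Then the Busemann function b⁺(x) := lim_{s→∞} (‖sv - x‖ - s) equals -⟨∇‖·‖(v), x⟩; in particular b⁺ is linear and b⁺ = -b⁻ where b⁻(x) := lim_{s→∞} (‖-sv - x‖ - s). -/
open Filter Topology

lemma aux_busemann (n : ℕ) (N : (Fin n → ℝ) → ℝ)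
    (hdeg : ∀ z, N z = 0 ↔ z = 0)
    (hhom : ∀ (a : ℝ) (z : Fin n → ℝ), N (a • z) = |a| * N z)
    (hC1 : ∀ z : Fin n → ℝ, z ≠ 0 → ContDiffAt ℝ 1 N z)
    (w : Fin n → ℝ) (hw : N w = 1) (x : Fin n → ℝ) :
    Tendsto (fun s : ℝ => N (s • w - x) - s) atTop
      (𝓝 (fderiv ℝ N w (-x))) := by
  have hw0 : w ≠ 0 := by
    intro h
    rw [h, (hdeg 0).mpr rfl] at hw
    norm_num at hw
  have hdiff : DifferentiableAt ℝ N w := (hC1 w hw0).differentiableAt one_ne_zero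
  set f : ℝ → ℝ := fun t => N (w - t • x) with hf
  have hc : HasDerivAt (fun t : ℝ => w - t • x) (-x) 0 := by
    have h1 : HasDerivAt (fun t : ℝ => t • x) ((1:ℝ) • x) 0 :=
      (hasDerivAt_id (0 : ℝ)).smul_const x
    simpa using h1.const_sub w
  have hderiv : HasDerivAt f (fderiv ℝ N w (-x)) 0 := by
    have hF : HasFDerivAt N (fderiv ℝ N w) (w - (0:ℝ) • x) := by
      simpa using hdiff.hasFDerivAt
    exact hF.comp_hasDerivAt 0 hc
  have hslope := hasDerivAt_iff_tendsto_slope.mp hderiv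
  have h1 : Tendsto (fun s : ℝ => (s : ℝ)⁻¹) atTop (𝓝[≠] (0:ℝ)) :=
    tendsto_inv_atTop_nhdsGT_zero.mono_right
      (nhdsWithin_mono _ (fun y hy => ne_of_gt hy))
  have h2 := hslope.comp h1
  refine h2.congr' ?_
  filter_upwards [eventually_gt_atTop (0:ℝ)] with s hs
  have hs0 : s ≠ 0 := ne_of_gt hs
  have hf0 : f 0 = 1 := by simp [hf, hw]
  have key : N (s • w - x) = s * N (w - s⁻¹ • x) := by
    have h := hhom s (w - s⁻¹ • x)
    rw [smul_sub, smul_smul, mul_inv_cancel₀ hs0, one_smul] at h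
    rw [h, abs_of_pos hs]
  have : (slope f 0) s⁻¹ = (f s⁻¹ - 1) * s := by
    rw [slope_def_field, hf0]
    field_simp
    ring
  simp only [Function.comp_apply]; rw [this]; simp only [hf]
  rw [key]
  ring

theorem stmt_11 (n : ℕ) (N : (Fin n → ℝ) → ℝ)
    (hnn : ∀ z, 0 ≤ N z)
    (hdeg : ∀ z, N z = 0 ↔ z = 0)
    (hhom : ∀ (a : ℝ) (z : Fin n → ℝ), N (a • z) = |a| * N z)
    (htri : ∀ z w, N (z + w) ≤ N z + N w)
    (hC1 : ∀ z : Fin n → ℝ, z ≠ 0 → ContDiffAt ℝ 1 N z)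
    (v : Fin n → ℝ) (hv : N v = 1) :
    ∀ x : Fin n → ℝ,
      Filter.Tendsto (fun s : ℝ => N (s • v - x) - s) Filter.atTop
        (𝓝 (-(fderiv ℝ N v x))) ∧
      Filter.Tendsto (fun s : ℝ => N ((-s) • v - x) - s) Filter.atTop
        (𝓝 (fderiv ℝ N v x)) := by
  intro x
  have hv0 : v ≠ 0 := by
    intro h
    rw [h, (hdeg 0).mpr rfl] at hv
    norm_num at hv
  have hnv : N (-v) = 1 := by
    have := hhom (-1) v
    simpa using this.trans (by simp [hv])
  have hnv0 : (-v : Fin n → ℝ) ≠ 0 := neg_ne_zero.mpr hv0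
  have hdiffv : DifferentiableAt ℝ N v := (hC1 v hv0).differentiableAt one_ne_zero
  have hdiffnv : DifferentiableAt ℝ N (-v) := (hC1 _ hnv0).differentiableAt one_ne_zero
  -- relation between derivatives at v and -v
  have hNneg : ∀ z : Fin n → ℝ, N (-z) = N z := by
    intro z
    have := hhom (-1) z
    simpa using this
  have hrel : ∀ y : Fin n → ℝ, fderiv ℝ N v y = fderiv ℝ N (-v) (-y) := by
    have hcomp : HasFDerivAt (fun z : Fin n → ℝ => N (-z))
        ((fderiv ℝ N (-v)).comp (-(ContinuousLinearMap.id ℝ (Fin n → ℝ)))) v := by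
      have hneg : HasFDerivAt (fun z : Fin n → ℝ => -z)
          (-(ContinuousLinearMap.id ℝ (Fin n → ℝ))) v := (hasFDerivAt_id v).neg
      exact hdiffnv.hasFDerivAt.comp v hneg
    have heq : (fun z : Fin n → ℝ => N (-z)) = N := funext hNneg
    rw [heq] at hcomp
    have := hcomp.fderiv
    intro y
    rw [this]
    simp
  constructor
  · have h := aux_busemann n N hdeg hhom hC1 v hv x
    rwa [map_neg] at h
  · have h := aux_busemann n N hdeg hhom hC1 (-v) hnv x
    have heqf : (fun s : ℝ => N (s • (-v) - x) - s) = (fun s : ℝ => N ((-s) • v - x) - s) := by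
      funext s
      rw [smul_neg, ← neg_smul]
    rw [heqf] at h
    rwa [← hrel x] at h
end

section
/- If f : ℝⁿ → ℝ is a generalized linear function on (ℝⁿ, ‖·‖, 𝓛ⁿ) where ‖·‖ is a C¹ norm, then f is a linear (affine) function; more precisely f = f(x̄) + Lip(f)·b⁻ = f(x̄) - Lip(f)·b⁺ for the Busemann functions b^± of an integral line γ through x̄, and these Busemann functions are linear. -/
open Filter Topology

lemma busemann_key (n : ℕ) (N : (Fin n → ℝ) → ℝ)
    (hdeg : ∀ z, N z = 0 ↔ z = 0)
    (hhom : ∀ (a : ℝ) (z : Fin n → ℝ), N (a • z) = |a| * N z)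
    (hC1 : ∀ z : Fin n → ℝ, z ≠ 0 → ContDiffAt ℝ 1 N z)
    (v : Fin n → ℝ) (hv : N v = 1) (d : Fin n → ℝ) :
    Tendsto (fun s : ℝ => N (d + s • v) - s) atTop (𝓝 (fderiv ℝ N v d)) := by
  have hv0 : v ≠ 0 := by
    intro h; rw [h] at hv; rw [(hdeg 0).mpr rfl] at hv; norm_num at hv
  have hdf : HasFDerivAt N (fderiv ℝ N v) v :=
    ((hC1 v hv0).differentiableAt one_ne_zero).hasFDerivAt
  set g : ℝ → ℝ := fun t => N (v + t • d) with hg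
  have hline : HasDerivAt (fun t : ℝ => v + t • d) d 0 := by
    simpa using ((hasDerivAt_id (0:ℝ)).smul_const d).const_add v
  have hgd : HasDerivAt g (fderiv ℝ N v d) 0 := by
    have hdf' : HasFDerivAt N (fderiv ℝ N v) ((fun t : ℝ => v + t • d) 0) := by
      simpa using hdf
    exact hdf'.comp_hasDerivAt 0 hline
  have hslope : Tendsto (slope g 0) (𝓝[≠] (0:ℝ)) (𝓝 (fderiv ℝ N v d)) :=
    hasDerivAt_iff_tendsto_slope.mp hgd
  have hinv : Tendsto (fun s : ℝ => s⁻¹) atTop (𝓝[≠] (0:ℝ)) :=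
    tendsto_inv_atTop_nhdsGT_zero.mono_right
      (nhdsWithin_mono _ (fun x hx => ne_of_gt hx))
  have hcomp : Tendsto (fun s : ℝ => slope g 0 s⁻¹) atTop (𝓝 (fderiv ℝ N v d)) :=
    hslope.comp hinv
  refine hcomp.congr' ?_
  filter_upwards [eventually_gt_atTop (0:ℝ)] with s hs
  have hs0 : s ≠ 0 := ne_of_gt hs
  have h1 : d + s • v = s • (v + s⁻¹ • d) := by
    rw [smul_add, smul_inv_smul₀ hs0]; abel
  have h2 : N (d + s • v) = s * N (v + s⁻¹ • d) := by
    rw [h1, hhom, abs_of_pos hs]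
  rw [slope_def_field]
  rw [div_eq_mul_inv, sub_zero, inv_inv]
  simp only [g, zero_smul, add_zero, hv]
  rw [h2]; ring

theorem stmt_12 (n : ℕ) (N : (Fin n → ℝ) → ℝ)
    (hnn : ∀ z, 0 ≤ N z)
    (hdeg : ∀ z, N z = 0 ↔ z = 0)
    (hhom : ∀ (a : ℝ) (z : Fin n → ℝ), N (a • z) = |a| * N z)
    (htri : ∀ z w, N (z + w) ≤ N z + N w)
    (hC1 : ∀ z : Fin n → ℝ, z ≠ 0 → ContDiffAt ℝ 1 N z)
    (f : (Fin n → ℝ) → ℝ) (L : ℝ) (hL : 0 ≤ L)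
    (xbar v : Fin n → ℝ) (hv : N v = 1)
    (γ : ℝ → Fin n → ℝ) (hγ : ∀ s : ℝ, γ s = xbar + s • v)
    (bp bm : (Fin n → ℝ) → ℝ)
    (hbp : ∀ x, Filter.Tendsto (fun s : ℝ => N (x - γ s) - s) Filter.atTop (𝓝 (bp x)))
    (hbm : ∀ x, Filter.Tendsto (fun s : ℝ => N (x - γ (-s)) - s) Filter.atTop (𝓝 (bm x)))
    (hsand : ∀ x, f xbar - L * bp x ≤ f x ∧ f x ≤ f xbar + L * bm x) :
    (∀ x, f x = f xbar + L * bm x) ∧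
    (∀ x, f x = f xbar - L * bp x) ∧
    ∃ w : Fin n → ℝ,
      (∀ x, bm x = ∑ i, w i * (x i - xbar i)) ∧
      (∀ x, bp x = -∑ i, w i * (x i - xbar i)) := by
  set φ := fderiv ℝ N v with hφ
  -- bm x = φ (x - xbar)
  have hbm' : ∀ x, bm x = φ (x - xbar) := by
    intro x
    have h1 : Tendsto (fun s : ℝ => N ((x - xbar) + s • v) - s) atTop (𝓝 (φ (x - xbar))) :=
      busemann_key n N hdeg hhom hC1 v hv (x - xbar)
    have h2 : ∀ s : ℝ, N (x - γ (-s)) - s = N ((x - xbar) + s • v) - s := by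
      intro s
      congr 2
      rw [hγ]
      module
    exact tendsto_nhds_unique ((hbm x).congr h2) h1
  have hbp' : ∀ x, bp x = -φ (x - xbar) := by
    intro x
    have h1 : Tendsto (fun s : ℝ => N ((xbar - x) + s • v) - s) atTop (𝓝 (φ (xbar - x))) :=
      busemann_key n N hdeg hhom hC1 v hv (xbar - x)
    have h2 : ∀ s : ℝ, N (x - γ s) - s = N ((xbar - x) + s • v) - s := by
      intro s
      congr 1
      have : x - γ s = (-1 : ℝ) • ((xbar - x) + s • v) := by rw [hγ]; module
      rw [this, hhom]
      norm_num
    have := tendsto_nhds_unique ((hbp x).congr h2) h1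
    rw [this]
    have : xbar - x = -(x - xbar) := by abel
    rw [this, map_neg]
  have hpm : ∀ x, bp x = -bm x := by
    intro x; rw [hbp', hbm']
  have hfx : ∀ x, f x = f xbar + L * bm x := by
    intro x
    have h1 := (hsand x).1
    have h2 := (hsand x).2
    rw [hpm x] at h1
    linarith
  refine ⟨hfx, fun x => by rw [hfx x, hpm x]; ring, ?_⟩
  refine ⟨fun i => φ (Pi.single i 1), fun x => ?_, fun x => ?_⟩
  · rw [hbm']
    have hx : x - xbar = ∑ i, (x i - xbar i) • (Pi.single i 1 : Fin n → ℝ) := by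
      funext j
      simp [Pi.single_apply, Finset.sum_apply, mul_ite]
    rw [hx, map_sum]
    refine Finset.sum_congr rfl fun i _ => ?_
    rw [map_smul]
    simp [mul_comm]
  · rw [hbp']
    have hx : x - xbar = ∑ i, (x i - xbar i) • (Pi.single i 1 : Fin n → ℝ) := by
      funext j
      simp [Pi.single_apply, Finset.sum_apply, mul_ite]
    rw [hx, map_sum]
    congr 1
    refine Finset.sum_congr rfl fun i _ => ?_
    rw [map_smul]
    simp [mul_comm]
end

section
/- Locality under minimum/maximum: let f₁, f₂ be Lipschitz functions on a locally Minkowski metric measure space with ks[f₁] ≤ 1 and ks[f₂] ≤ 1 m-a.e. Then f := max{f₁, f₂} and g := min{f₁, f₂} are Lipschitz and satisfy ks[f] ≤ 1 and ks[g] ≤ 1 m-a.e. Key computation: if x is a density point of the set {f₁ ≥ f₂}, at which the limits ks[f](x) and ks[f₁](x) exist, then ks[max{f₁,f₂}](x) = ks[f₁](x). -/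
open MeasureTheory Filter Metric Topology
open scoped ENNReal NNReal

/-- The Korevaar–Schoen energy density of `f` at scale `r`:
`ks_r[f](x) = ( ⨍_{B_r(x)} |f(y)-f(x)|²/r² dm(y) )^{1/2}`. -/
noncomputable def ksr {X : Type*} [MetricSpace X] [MeasurableSpace X]
    (m : Measure X) (f : X → ℝ) (r : ℝ) (x : X) : ℝ :=
  Real.sqrt (⨍ y in Metric.ball x r, ((f y - f x) / r) ^ 2 ∂m)

/-- The pointwise Lipschitz constant `Lip[f](x) = limsup_{y→x} |f(y)-f(x)|/d(y,x)`. -/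
noncomputable def pLip {X : Type*} [MetricSpace X] (f : X → ℝ) (x : X) : ℝ :=
  Filter.limsup (fun y => |f y - f x| / dist y x) (𝓝[≠] x)

/-- `g` is an upper gradient of `f` with respect to the distance `dd`:
for every absolutely continuous curve `γ : [0,1] → X`, with admissible speed `ℓ`,
`|f(γ₁)-f(γ₀)| ≤ ∫₀¹ g(γ_s) ℓ(s) ds`. -/
def IsUpperGradientWrt {X : Type*} (dd : X → X → ℝ) (f g : X → ℝ) : Prop :=
  ∀ (γ : ℝ → X) (ℓ : ℝ → ℝ),
    (∀ s ∈ Set.Icc (0:ℝ) 1, 0 ≤ ℓ s) →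
    IntervalIntegrable ℓ MeasureTheory.volume 0 1 →
    (∀ s t : ℝ, 0 ≤ s → s ≤ t → t ≤ 1 → dd (γ s) (γ t) ≤ ∫ u in s..t, ℓ u) →
    |f (γ 1) - f (γ 0)| ≤ ∫ s in (0:ℝ)..1, g (γ s) * ℓ s

/-- Local doubling condition for the balls of the metric. -/
def LocDoubling {X : Type*} [MetricSpace X] [MeasurableSpace X] (m : Measure X) : Prop :=
  ∀ R : ℝ, 0 < R → ∃ C : ℝ≥0∞, 0 < C ∧ ∀ (x : X) (r : ℝ), 0 < r → r < R →
    m (Metric.ball x (2 * r)) ≤ C * m (Metric.ball x r)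

/-- Local (2-)Poincaré inequality with dilation constant `Λ`. -/
def PoincareWith {X : Type*} [MetricSpace X] [MeasurableSpace X] (m : Measure X) (Λ : ℝ) : Prop :=
  ∀ R : ℝ, 0 < R → ∃ C : ℝ, 1 ≤ C ∧ ∀ (f g : X → ℝ) (x : X) (r : ℝ),
    Measurable f → IsUpperGradientWrt dist f g → 0 < r → r < R →
    ⨍ y in Metric.ball x r, |f y - ⨍ z in Metric.ball x r, f z ∂m| ∂m ≤
      C * r * Real.sqrt (⨍ y in Metric.ball x (Λ * r), (g y) ^ 2 ∂m)

/-- A space supports a Poincaré inequality if it does for some dilation `Λ ≥ 1`. -/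
def SupportsPoincare {X : Type*} [MetricSpace X] [MeasurableSpace X] (m : Measure X) : Prop :=
  ∃ Λ : ℝ, 1 ≤ Λ ∧ PoincareWith m Λ

/-- "`ks[f] ≤ 1` `m`-a.e.": at `m`-a.e. point the limit of the Korevaar–Schoen
potentials exists and is at most `1`. -/
def KsLeOne {X : Type*} [MetricSpace X] [MeasurableSpace X]
    (m : Measure X) (f : X → ℝ) : Prop :=
  ∀ᵐ x ∂m, ∃ a : ℝ,
    Filter.Tendsto (fun r => ksr m f r x) (𝓝[>] (0:ℝ)) (𝓝 a) ∧ a ≤ 1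

/-- A competitor for the intrinsic Korevaar–Schoen distance: a Lipschitz
function with `ks[f] ≤ 1` `m`-a.e. -/
def KsCompetitor {X : Type*} [MetricSpace X] [MeasurableSpace X]
    (m : Measure X) (f : X → ℝ) : Prop :=
  (∃ K : ℝ≥0, LipschitzWith K f) ∧ KsLeOne m f

/-- The intrinsic distance associated to the Korevaar–Schoen energy. -/
noncomputable def dKS {X : Type*} [MetricSpace X] [MeasurableSpace X]
    (m : Measure X) (x y : X) : ℝ :=
  sSup {t : ℝ | ∃ f : X → ℝ, KsCompetitor m f ∧ t = f y - f x}

/-- `(X, d, m)` is a locally Minkowski space with dimension bound `Nb`: at `m`-a.e.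
point there are, at all sufficiently small scales, almost-isometric charts onto a
fixed `C¹`-normed space `(ℝ^n, Nm)`, almost surjective and almost measure-preserving. -/
def LocallyMinkowski {X : Type*} [MetricSpace X] [MeasurableSpace X]
    (m : Measure X) (Nb : ℕ) : Prop :=
  ∀ᵐ x ∂m, ∃ n : ℕ, n ≤ Nb ∧ ∃ Nm : (Fin n → ℝ) → ℝ,
    (∀ z, 0 ≤ Nm z) ∧ (∀ z, Nm z = 0 ↔ z = 0) ∧
    (∀ (a : ℝ) (z : Fin n → ℝ), Nm (a • z) = |a| * Nm z) ∧
    (∀ z w, Nm (z + w) ≤ Nm z + Nm w) ∧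
    (∀ z : Fin n → ℝ, z ≠ 0 → ContDiffAt ℝ 1 Nm z) ∧
    ∃ (i : ℝ → X → Fin n → ℝ) (c : ℝ), 0 < c ∧
      (∀ r : ℝ, 0 < r → i r x = 0) ∧
      (∀ ε : ℝ, 0 < ε → ∃ r₀ > (0:ℝ), ∀ r : ℝ, 0 < r → r < r₀ →
        (∀ y ∈ Metric.ball x r, ∀ y' ∈ Metric.ball x r,
          (1 - ε) * (dist y y' / r) ≤ Nm (i r y - i r y') ∧
          Nm (i r y - i r y') ≤ (1 + ε) * (dist y y' / r)) ∧
        ({z | Nm z < 1 - ε} ⊆ i r '' Metric.ball x r) ∧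
        (∀ S : Set (Fin n → ℝ), MeasurableSet S → S ⊆ i r '' Metric.ball x r →
          ENNReal.ofReal ((1 - ε) * c) * MeasureTheory.volume S ≤
              m (i r ⁻¹' S ∩ Metric.ball x r) / m (Metric.ball x r) ∧
            m (i r ⁻¹' S ∩ Metric.ball x r) / m (Metric.ball x r) ≤
              ENNReal.ofReal ((1 + ε) * c) * MeasureTheory.volume S))


section AuxKS

open MeasureTheory Filter Metric Topology Set
open scoped ENNReal NNReal

/-! ### Elementary square-root estimates -/

lemma aux_sqrt_sub_le (a b : ℝ) (hb : 0 ≤ b) (hba : b ≤ a) :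
    Real.sqrt a - Real.sqrt b ≤ Real.sqrt (a - b) := by
  have h1 : Real.sqrt a ≤ Real.sqrt (a - b) + Real.sqrt b := by
    have h2 : a ≤ (Real.sqrt (a - b) + Real.sqrt b) ^ 2 := by
      have e1 : Real.sqrt (a - b) ^ 2 = a - b := Real.sq_sqrt (by linarith)
      have e2 : Real.sqrt b ^ 2 = b := Real.sq_sqrt hb
      nlinarith [Real.sqrt_nonneg (a - b), Real.sqrt_nonneg b]
    calc Real.sqrt a ≤ Real.sqrt ((Real.sqrt (a - b) + Real.sqrt b) ^ 2) := Real.sqrt_le_sqrt h2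
    _ = Real.sqrt (a - b) + Real.sqrt b := by
        rw [Real.sqrt_sq (by positivity)]
  linarith

lemma aux_sqrt_abs_sub (a b : ℝ) (ha : 0 ≤ a) (hb : 0 ≤ b) :
    |Real.sqrt a - Real.sqrt b| ≤ Real.sqrt |a - b| := by
  rcases le_total b a with h | h
  · rw [abs_of_nonneg (sub_nonneg.2 h), abs_of_nonneg (sub_nonneg.2 (Real.sqrt_le_sqrt h))]
    exact aux_sqrt_sub_le a b hb h
  · rw [abs_of_nonpos (sub_nonpos.2 h), abs_of_nonpos (sub_nonpos.2 (Real.sqrt_le_sqrt h)),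
      neg_sub, neg_sub]
    exact aux_sqrt_sub_le b a ha h

/-! ### The complement of the support is null -/

lemma aux_null_nonsupport {X : Type*} [MetricSpace X] [MeasurableSpace X] [BorelSpace X]
    [TopologicalSpace.SeparableSpace X] (m : Measure X) :
    m {x : X | ∃ r : ℝ, 0 < r ∧ m (Metric.ball x r) = 0} = 0 := by
  haveI : SecondCountableTopology X := UniformSpace.secondCountable_of_separable X
  set ι := {p : X × ℝ // m (Metric.ball p.1 p.2) = 0}
  have hsub : {x : X | ∃ r : ℝ, 0 < r ∧ m (Metric.ball x r) = 0} ⊆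
      ⋃ i : ι, Metric.ball i.1.1 i.1.2 := by
    rintro x ⟨r, hr, hm⟩
    exact Set.mem_iUnion.2 ⟨⟨(x, r), hm⟩, Metric.mem_ball_self hr⟩
  refine measure_mono_null hsub ?_
  obtain ⟨T, hTc, hT⟩ := TopologicalSpace.isOpen_iUnion_countable
    (fun i : ι => Metric.ball i.1.1 i.1.2) (fun i => Metric.isOpen_ball)
  rw [← hT]
  refine le_antisymm ?_ zero_le
  calc m (⋃ i ∈ T, Metric.ball i.1.1 i.1.2) ≤ ∑' i : T, m (Metric.ball (i:ι).1.1 (i:ι).1.2) :=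
        measure_biUnion_le m hTc _
  _ = 0 := by simp [fun i : T => (i : ι).2]

/-! ### Pointwise doubling strata -/

set_option linter.unusedSectionVars false

variable {X : Type*} [MetricSpace X] [MeasurableSpace X] [BorelSpace X] (m : Measure X)

def Gset (k : ℕ) : Set X :=
  {x : X | ∀ s : ℝ, 0 < s → s < (k : ℝ)⁻¹ →
    (k : ℝ≥0∞)⁻¹ * m (Metric.ball x s) ≤ m (Metric.ball x (s / 4))}

lemma Gset_ball4 {k : ℕ} (hk : 0 < k) {x : X} (hx : x ∈ Gset m k)
    {r : ℝ} (hr : 0 < r) (hr' : r < (k : ℝ)⁻¹ / 4) :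
    m (Metric.ball x (4 * r)) ≤ (k : ℝ≥0∞) * m (Metric.ball x r) := by
  have h4 : (0:ℝ) < 4 * r := by linarith
  have h := hx (4 * r) h4 (by linarith)
  have e : 4 * r / 4 = r := by ring
  rw [e] at h
  have hk0 : (k : ℝ≥0∞) ≠ 0 := by exact_mod_cast hk.ne'
  have hkt : (k : ℝ≥0∞) ≠ ⊤ := ENNReal.natCast_ne_top k
  calc m (Metric.ball x (4 * r)) = (k : ℝ≥0∞) * ((k : ℝ≥0∞)⁻¹ * m (Metric.ball x (4 * r))) := by
        rw [← mul_assoc, ENNReal.mul_inv_cancel hk0 hkt, one_mul]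
  _ ≤ (k : ℝ≥0∞) * m (Metric.ball x r) := by gcongr

lemma Gset_closedBall_doubling {k : ℕ} (hk : 0 < k) {x : X} (hx : x ∈ Gset m k)
    {r : ℝ} (hr : 0 < r) (hr' : r < (k : ℝ)⁻¹ / 4) :
    m (Metric.closedBall x (3 * r)) ≤ (k : ℝ≥0∞) * m (Metric.closedBall x r) := by
  calc m (Metric.closedBall x (3 * r)) ≤ m (Metric.ball x (4 * r)) :=
        measure_mono (Metric.closedBall_subset_ball (by linarith))
  _ ≤ (k : ℝ≥0∞) * m (Metric.ball x r) := Gset_ball4 m hk hx hr hr'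
  _ ≤ (k : ℝ≥0∞) * m (Metric.closedBall x r) := by
        gcongr; exact Metric.ball_subset_closedBall

lemma Gset_cb_le_ball {k : ℕ} (hk : 0 < k) {x : X} (hx : x ∈ Gset m k)
    {r : ℝ} (hr : 0 < r) (hr' : r < (k : ℝ)⁻¹ / 4) :
    m (Metric.closedBall x r) ≤ (k : ℝ≥0∞) * m (Metric.ball x r) := by
  calc m (Metric.closedBall x r) ≤ m (Metric.ball x (4 * r)) :=
        measure_mono (Metric.closedBall_subset_ball (by linarith))
  _ ≤ (k : ℝ≥0∞) * m (Metric.ball x r) := Gset_ball4 m hk hx hr hr'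

/-! ### Continuity of the Minkowski norm -/

lemma Nm_sum_le {n : ℕ} (Nm : (Fin n → ℝ) → ℝ)
    (h0 : Nm 0 = 0)
    (htri : ∀ z w, Nm (z + w) ≤ Nm z + Nm w) :
    ∀ (s : Finset (Fin n)) (w : Fin n → (Fin n → ℝ)),
      Nm (∑ i ∈ s, w i) ≤ ∑ i ∈ s, Nm (w i) := by
  intro s
  induction s using Finset.induction with
  | empty => intro w; simp [h0]
  | insert _ _ hx ih =>
      intro w
      rw [Finset.sum_insert hx, Finset.sum_insert hx]
      exact (htri _ _).trans (by gcongr; exact ih w)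

lemma Nm_continuous {n : ℕ} (Nm : (Fin n → ℝ) → ℝ)
    (hiff : ∀ z, Nm z = 0 ↔ z = 0)
    (hhom : ∀ (a : ℝ) (z : Fin n → ℝ), Nm (a • z) = |a| * Nm z)
    (htri : ∀ z w, Nm (z + w) ≤ Nm z + Nm w) :
    Continuous Nm := by
  have h0 : Nm 0 = 0 := (hiff 0).2 rfl
  have hbound : ∀ v : Fin n → ℝ, Nm v ≤ ∑ i, |v i| * Nm (Pi.single i 1) := by
    intro v
    have hv : v = ∑ i, Pi.single i (v i) := by
      ext j; simp [Pi.single_apply]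
    calc Nm v = Nm (∑ i, Pi.single i (v i)) := by rw [← hv]
    _ ≤ ∑ i, Nm (Pi.single i (v i)) := Nm_sum_le Nm h0 htri _ _
    _ = ∑ i, |v i| * Nm (Pi.single i 1) := by
        refine Finset.sum_congr rfl fun i _ => ?_
        have : Pi.single i (v i) = (v i) • (Pi.single i 1 : Fin n → ℝ) := by
          ext j; by_cases h : j = i <;> simp [Pi.single_apply, h]
        rw [this, hhom]
  have hsub : ∀ z w : Fin n → ℝ, |Nm z - Nm w| ≤ Nm (z - w) := by
    intro z w
    have hneg : ∀ v : Fin n → ℝ, Nm (-v) = Nm v := by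
      intro v
      have : -v = (-1 : ℝ) • v := by simp
      rw [this, hhom]; simp
    have h1 : Nm z ≤ Nm (z - w) + Nm w := by
      have := htri (z - w) w; simpa using this
    have h2 : Nm w ≤ Nm (z - w) + Nm z := by
      have := htri (w - z) z
      rw [show w - z + z = w by abel] at this
      rw [show w - z = -(z - w) by abel, hneg] at this
      exact this
    rw [abs_sub_le_iff]; constructor <;> linarith
  rw [continuous_iff_continuousAt]
  intro w
  have key : Tendsto (fun z => Nm z - Nm w) (𝓝 w) (𝓝 0) := by
    refine squeeze_zero_norm (a := fun z => ∑ i, |z i - w i| * Nm (Pi.single i 1)) ?_ ?_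
    · intro z
      calc ‖Nm z - Nm w‖ = |Nm z - Nm w| := rfl
      _ ≤ Nm (z - w) := hsub z w
      _ ≤ ∑ i, |(z - w) i| * Nm (Pi.single i 1) := hbound _
      _ = ∑ i, |z i - w i| * Nm (Pi.single i 1) := by simp
    · have : Continuous fun z : Fin n → ℝ => ∑ i, |z i - w i| * Nm (Pi.single i 1) := by
        continuity
      have h := this.tendsto w
      simpa using h
  have : Tendsto (fun z => (Nm z - Nm w) + Nm w) (𝓝 w) (𝓝 (0 + Nm w)) :=
    key.add_const _
  simp at this; exact this

/-! ### Charts give pointwise doubling -/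

theorem ae_mem_Gset {X : Type*} [MetricSpace X] [MeasurableSpace X] [BorelSpace X]
    (m : Measure X) [IsFiniteMeasure m] (Nb : ℕ) (hLM : LocallyMinkowski m Nb) :
    ∀ᵐ x ∂m, ∃ k : ℕ, 0 < k ∧ x ∈ Gset m k := by
  filter_upwards [hLM] with x hx
  obtain ⟨n, -, Nm, hpos, hiff, hhom, htri, -, i, c, hc, hix, hch⟩ := hx
  have hNmc : Continuous Nm := Nm_continuous Nm hiff hhom htri
  obtain ⟨r₀, hr₀, hch2⟩ := hch (1/2) (by norm_num)
  -- the good open set S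
  set S : Set (Fin n → ℝ) := {z | Nm z < 1/8} with hS
  have hSopen : IsOpen S := isOpen_lt hNmc continuous_const
  have hSmem : (0 : Fin n → ℝ) ∈ S := by
    simp only [hS, Set.mem_setOf_eq, (hiff 0).2 rfl]; norm_num
  have hSvol : 0 < volume S := hSopen.measure_pos volume ⟨0, hSmem⟩
  set κ₀ : ℝ≥0∞ := ENNReal.ofReal ((1 - 1/2) * c) * volume S with hκ₀
  have hκ₀pos : 0 < κ₀ := by
    apply ENNReal.mul_pos
    · simp only [ne_eq, ENNReal.ofReal_eq_zero, not_le]; nlinarith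
    · exact hSvol.ne'
  set κ : ℝ≥0∞ := min κ₀ 1 with hκ
  have hκpos : 0 < κ := lt_min hκ₀pos zero_lt_one
  -- key: κ * m (ball x s) ≤ m (ball x (s/4)) for 0 < s < r₀
  have key : ∀ s : ℝ, 0 < s → s < r₀ → κ * m (Metric.ball x s) ≤ m (Metric.ball x (s/4)) := by
    intro s hs hs'
    rcases eq_or_ne (m (Metric.ball x s)) 0 with h0 | h0
    · simp [h0]
    obtain ⟨hbili, hsurj, hmeas⟩ := hch2 s hs hs'
    have hSsub : S ⊆ i s '' Metric.ball x s := by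
      intro z hz
      apply hsurj
      have hz' : Nm z < 1/8 := hz
      simp only [Set.mem_setOf_eq]
      linarith
    have hlow := (hmeas S hSopen.measurableSet hSsub).1
    have hpre : i s ⁻¹' S ∩ Metric.ball x s ⊆ Metric.ball x (s/4) := by
      rintro y ⟨hyS, hyb⟩
      have hb := (hbili y hyb x (Metric.mem_ball_self hs)).1
      rw [hix s hs, sub_zero] at hb
      have hNy : Nm (i s y) < 1/8 := hyS
      have h14 : dist y x / s < 1/4 := by linarith
      have hd : dist y x < s/4 := by
        rw [div_lt_iff₀ hs] at h14; linarith
      rw [Metric.mem_ball]; exact hd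
    have hdiv : κ ≤ m (Metric.ball x (s/4)) / m (Metric.ball x s) := by
      calc κ ≤ κ₀ := min_le_left _ _
      _ ≤ m (i s ⁻¹' S ∩ Metric.ball x s) / m (Metric.ball x s) := hlow
      _ ≤ m (Metric.ball x (s/4)) / m (Metric.ball x s) :=
          ENNReal.div_le_div_right (measure_mono hpre) _
    rw [ENNReal.le_div_iff_mul_le (Or.inl h0) (Or.inl (measure_ne_top m _))] at hdiv
    exact hdiv
  -- choose k
  obtain ⟨k₁, hk₁⟩ := ENNReal.exists_inv_nat_lt hκpos.ne'
  obtain ⟨k₂, hk₂⟩ := exists_nat_gt (1 / r₀)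
  refine ⟨max k₁ k₂ + 1, Nat.succ_pos _, ?_⟩
  intro s hs hs'
  set k := max k₁ k₂ + 1
  have hkr : (k : ℝ)⁻¹ < r₀ := by
    have h2 : (r₀⁻¹ : ℝ) < (k : ℕ) := by
      calc (r₀⁻¹:ℝ) = 1 / r₀ := (one_div _).symm
      _ < k₂ := hk₂
      _ ≤ ((k : ℕ) : ℝ) := by
          exact_mod_cast le_trans (le_max_right _ _) (Nat.le_succ _)
    exact inv_lt_of_inv_lt₀ hr₀ h2
  have hsr₀ : s < r₀ := hs'.trans hkr
  have hκk : (k : ℝ≥0∞)⁻¹ ≤ κ := by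
    apply le_of_lt
    apply lt_of_le_of_lt _ hk₁
    apply ENNReal.inv_le_inv.2
    exact_mod_cast le_trans (le_max_left _ _) (Nat.le_succ _)
  calc (k : ℝ≥0∞)⁻¹ * m (Metric.ball x s) ≤ κ * m (Metric.ball x s) := by gcongr
  _ ≤ m (Metric.ball x (s/4)) := key s hs hsr₀

variable [IsFiniteMeasure m] [TopologicalSpace.SeparableSpace X]

lemma ratio_add_compl (A B : Set X) (hA : MeasurableSet A) (hB0 : m B ≠ 0) :
    m (B ∩ A) / m B + m (B ∩ Aᶜ) / m B = 1 := by
  have h : m (B ∩ A) + m (B ∩ Aᶜ) = m B := by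
    have := measure_inter_add_diff B hA (μ := m)
    rwa [Set.diff_eq] at this
  rw [ENNReal.div_add_div_same, h, ENNReal.div_self hB0 (measure_ne_top m B)]

theorem densA (E : Set X) (k : ℕ) (hk : 0 < k) (ρ : ℝ≥0∞) (hρ : ρ < 1)
    (hcb : ∀ x ∈ Gset m k, ∀ r : ℝ, 0 < r → r < (k:ℝ)⁻¹/4 →
      m (Metric.closedBall x (3 * r)) ≤ (k : ℝ≥0∞) * m (Metric.closedBall x r)) :
    m {x | x ∈ E ∧ x ∈ Gset m k ∧
      Filter.liminf (fun r : ℝ => m (Metric.closedBall x r ∩ E) / m (Metric.closedBall x r))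
        (𝓝[>] (0:ℝ)) < ρ} = 0 := by
  haveI : SecondCountableTopology X := UniformSpace.secondCountable_of_separable X
  set s := {x | x ∈ E ∧ x ∈ Gset m k ∧
      Filter.liminf (fun r : ℝ => m (Metric.closedBall x r ∩ E) / m (Metric.closedBall x r))
        (𝓝[>] (0:ℝ)) < ρ} with hs_def
  have main : ∀ ε : ℝ≥0∞, 0 < ε → ε ≠ ∞ → m s ≤ ρ * (m s + ε) := by
    intro ε hε hεt
    -- open set U ⊇ s with m U < m s + ε
    have hlt : m (toMeasurable m s) < m s + ε := by
      rw [measure_toMeasurable]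
      exact ENNReal.lt_add_right (measure_ne_top m s) hε.ne'
    obtain ⟨U, hUsub, hUopen, hUm⟩ := Set.exists_isOpen_lt_of_lt (toMeasurable m s) _ hlt
    have hsU : s ⊆ U := (subset_toMeasurable m s).trans hUsub
    -- the Vitali family
    set t : Set (X × ℝ) := {p | p.1 ∈ s ∧ 0 < p.2 ∧ p.2 < (k:ℝ)⁻¹/4 ∧
      Metric.closedBall p.1 p.2 ⊆ U ∧
      m (Metric.closedBall p.1 p.2 ∩ E) ≤ ρ * m (Metric.closedBall p.1 p.2)} with ht_def
    obtain ⟨u, hut, hu_count, hu_disj, hu_cov⟩ :=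
      Vitali.exists_disjoint_covering_ae m s t (k : ℝ≥0)
        (fun p => p.2) (fun p => p.1) (fun p => Metric.closedBall p.1 p.2)
        (fun p _ => subset_rfl)
        (by
          rintro p ⟨hp1, hp2, hp3, -, -⟩
          have := hcb p.1 hp1.2.1 p.2 hp2 hp3
          simpa using this)
        (by
          rintro p ⟨hp1, hp2, -⟩
          exact ⟨p.1, Metric.ball_subset_interior_closedBall (Metric.mem_ball_self hp2)⟩)
        (fun p _ => Metric.isClosed_closedBall)
        (by
          -- fineness
          rintro x hx ε' hε'
          obtain ⟨δ, hδ, hδU⟩ := Metric.isOpen_iff.1 hUopen x (hsU hx)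
          have hfreq : ∃ᶠ r in 𝓝[>] (0:ℝ),
              m (Metric.closedBall x r ∩ E) / m (Metric.closedBall x r) < ρ :=
            Filter.frequently_lt_of_liminf_lt (by isBoundedDefault) hx.2.2
          have hev : ∀ᶠ r in 𝓝[>] (0:ℝ), 0 < r ∧ r < min (min ((k:ℝ)⁻¹/4) δ) ε' := by
            have h1 : Set.Ioo (0:ℝ) (min (min ((k:ℝ)⁻¹/4) δ) ε') ∈ 𝓝[>] (0:ℝ) := by
              apply Ioo_mem_nhdsGT_of_mem
              constructor
              · exact le_refl _
              · have hki : (0:ℝ) < (k:ℝ)⁻¹/4 := by positivity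
                simp only [lt_min_iff]
                exact ⟨⟨hki, hδ⟩, hε'⟩
            filter_upwards [h1] with r hr
            exact ⟨hr.1, hr.2⟩
          obtain ⟨r, hrρ, hr0, hrb⟩ := (hfreq.and_eventually hev).exists
          refine ⟨(x, r), ⟨hx, hr0, ?_, ?_, ?_⟩, ?_, rfl⟩
          · exact lt_of_lt_of_le hrb (le_trans (min_le_left _ _) (min_le_left _ _))
          · refine (Metric.closedBall_subset_ball ?_).trans hδU
            exact lt_of_lt_of_le hrb (le_trans (min_le_left _ _) (min_le_right _ _))
          · -- ratio < ρ implies measure inequality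
            rcases eq_or_ne (m (Metric.closedBall x r)) 0 with h0 | h0
            · have : m (Metric.closedBall x r ∩ E) = 0 :=
                measure_mono_null Set.inter_subset_left h0
              simp [this]
            · rw [ENNReal.div_lt_iff (Or.inl h0) (Or.inl (measure_ne_top m _))] at hrρ
              exact le_of_lt (lt_of_lt_of_le hrρ (by rw [mul_comm]))
          · exact le_of_lt (lt_of_lt_of_le hrb (min_le_right _ _)))
    -- the measure estimate
    have h1 : m s ≤ m (s ∩ ⋃ a ∈ u, Metric.closedBall a.1 a.2) := by
      have := measure_le_inter_add_diff m s (⋃ a ∈ u, Metric.closedBall a.1 a.2)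
      rw [hu_cov] at this
      simpa using this
    have h2 : m (s ∩ ⋃ a ∈ u, Metric.closedBall a.1 a.2) ≤
        ∑' a : u, m (Metric.closedBall (a:X×ℝ).1 (a:X×ℝ).2 ∩ E) := by
      calc m (s ∩ ⋃ a ∈ u, Metric.closedBall a.1 a.2)
          ≤ m (⋃ a ∈ u, (Metric.closedBall a.1 a.2 ∩ E)) := by
            apply measure_mono
            rintro y ⟨hys, hyU⟩
            obtain ⟨a, ha, hya⟩ := Set.mem_iUnion₂.1 hyU
            exact Set.mem_iUnion₂.2 ⟨a, ha, hya, hys.1⟩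
      _ ≤ ∑' a : u, m (Metric.closedBall (a:X×ℝ).1 (a:X×ℝ).2 ∩ E) :=
            measure_biUnion_le m hu_count _
    have h3 : ∑' a : u, m (Metric.closedBall (a:X×ℝ).1 (a:X×ℝ).2 ∩ E) ≤
        ∑' a : u, ρ * m (Metric.closedBall (a:X×ℝ).1 (a:X×ℝ).2) := by
      apply ENNReal.tsum_le_tsum
      intro a
      exact (hut a.2).2.2.2.2
    have h4 : ∑' a : u, ρ * m (Metric.closedBall (a:X×ℝ).1 (a:X×ℝ).2) =
        ρ * m (⋃ a ∈ u, Metric.closedBall a.1 a.2) := by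
      rw [ENNReal.tsum_mul_left]
      congr 1
      exact (measure_biUnion hu_count hu_disj fun a _ => measurableSet_closedBall).symm
    have h5 : m (⋃ a ∈ u, Metric.closedBall a.1 a.2) ≤ m U := by
      apply measure_mono
      apply Set.iUnion₂_subset
      intro a ha
      exact (hut ha).2.2.2.1
    calc m s ≤ ∑' a : u, m (Metric.closedBall (a:X×ℝ).1 (a:X×ℝ).2 ∩ E) := h1.trans h2
    _ ≤ ρ * m (⋃ a ∈ u, Metric.closedBall a.1 a.2) := h3.trans_eq h4
    _ ≤ ρ * m U := by gcongr
    _ ≤ ρ * (m s + ε) := mul_le_mul_right hUm.le _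
  -- conclude m s = 0
  by_contra hms
  have hms' : 0 < m s := pos_iff_ne_zero.2 hms
  have hfin : m s ≠ ∞ := measure_ne_top m s
  have hρs : ρ * m s < m s := by
    have := ENNReal.mul_lt_mul_right hms'.ne' hfin hρ
    rw [mul_one, mul_comm] at this; exact this
  set δ := m s - ρ * m s with hδ
  have hδpos : 0 < δ := tsub_pos_of_lt hρs
  have hδfin : δ ≠ ∞ := by
    apply ne_top_of_le_ne_top hfin
    exact tsub_le_self
  have := main (δ/2) (ENNReal.half_pos hδpos.ne')
    (ne_top_of_lt (ENNReal.half_lt_self hδpos.ne' hδfin))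
  have hcontr : m s < m s := by
    calc m s ≤ ρ * (m s + δ/2) := this
    _ = ρ * m s + ρ * (δ/2) := by rw [mul_add]
    _ ≤ ρ * m s + δ/2 := by
        gcongr
        exact mul_le_of_le_one_left zero_le hρ.le
    _ < ρ * m s + δ :=
        ENNReal.add_lt_add_left (ENNReal.mul_ne_top (ne_top_of_lt hρ) hfin)
          (ENNReal.half_lt_self hδpos.ne' hδfin)
    _ = m s := by
        rw [hδ, add_tsub_cancel_of_le hρs.le]
  exact absurd hcontr (lt_irrefl _)

theorem densB
    (hG : ∀ᵐ x ∂m, ∃ k : ℕ, 0 < k ∧ x ∈ Gset m k)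
    (hN : m {x : X | ∃ r : ℝ, 0 < r ∧ m (Metric.ball x r) = 0} = 0)
    (hball4 : ∀ (k : ℕ), 0 < k → ∀ x ∈ Gset m k, ∀ r : ℝ, 0 < r → r < (k:ℝ)⁻¹/4 →
      m (Metric.ball x (4 * r)) ≤ (k : ℝ≥0∞) * m (Metric.ball x r))
    (hdensA : ∀ (E : Set X) (k : ℕ), 0 < k → ∀ ρ : ℝ≥0∞, ρ < 1 →
      m {x | x ∈ E ∧ x ∈ Gset m k ∧
        Filter.liminf (fun r : ℝ => m (Metric.closedBall x r ∩ E) / m (Metric.closedBall x r))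
          (𝓝[>] (0:ℝ)) < ρ} = 0)
    (E : Set X) (hE : MeasurableSet E) :
    ∀ᵐ x ∂m, x ∈ E → Filter.Tendsto
      (fun r : ℝ => m (Metric.ball x r ∩ E) / m (Metric.ball x r)) (𝓝[>] (0:ℝ)) (𝓝 1) := by
  -- the bad sets
  set bad : ℕ → ℚ → Set X := fun k q =>
    {x | (0 < k ∧ ((Real.toNNReal (q:ℝ) : ℝ≥0∞) < 1)) ∧ x ∈ E ∧ x ∈ Gset m k ∧
      Filter.liminf (fun r : ℝ => m (Metric.closedBall x r ∩ E) / m (Metric.closedBall x r))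
        (𝓝[>] (0:ℝ)) < (Real.toNNReal (q:ℝ) : ℝ≥0∞)} with hbad
  have hbadnull : ∀ (k : ℕ) (q : ℚ), m (bad k q) = 0 := by
    intro k q
    by_cases h : 0 < k ∧ ((Real.toNNReal (q:ℝ) : ℝ≥0∞) < 1)
    · refine measure_mono_null ?_ (hdensA E k h.1 _ h.2)
      rintro x ⟨-, hx⟩
      exact hx
    · have : bad k q = ∅ := by
        ext x; simp only [hbad, Set.mem_setOf_eq, Set.mem_empty_iff_false, iff_false]
        rintro ⟨hh, -⟩; exact h hh
      simp [this]
  have hbadall : m (⋃ (k : ℕ) (q : ℚ), bad k q) = 0 :=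
    measure_iUnion_null fun k => measure_iUnion_null fun q => hbadnull k q
  filter_upwards [hG, (measure_eq_zero_iff_ae_notMem (μ := m)).1 hN,
    (measure_eq_zero_iff_ae_notMem (μ := m)).1 hbadall] with x hxG hxN hxB hxE
  obtain ⟨k, hk, hGx⟩ := hxG
  have hpos : ∀ r : ℝ, 0 < r → m (Metric.ball x r) ≠ 0 := by
    intro r hr h0
    exact hxN ⟨r, hr, h0⟩
  -- Step 1: liminf of closed-ball ratios ≥ 1
  set L := Filter.liminf
      (fun r : ℝ => m (Metric.closedBall x r ∩ E) / m (Metric.closedBall x r)) (𝓝[>] (0:ℝ)) with hL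
  have hL1 : 1 ≤ L := by
    by_contra hlt
    push_neg at hlt
    obtain ⟨q, hq0, hq1, hq2⟩ := ENNReal.lt_iff_exists_rat_btwn.1 hlt
    exact hxB (Set.mem_iUnion.2 ⟨k, Set.mem_iUnion.2 ⟨q,
      ⟨⟨hk, hq2⟩, hxE, hGx, hq1⟩⟩⟩)
  -- Step 2: ratios ≤ 1
  have hle1 : ∀ r : ℝ, 0 < r →
      m (Metric.closedBall x r ∩ E) / m (Metric.closedBall x r) ≤ 1 := by
    intro r hr
    apply ENNReal.div_le_of_le_mul
    rw [one_mul]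
    exact measure_mono Set.inter_subset_left
  have hev_le1 : ∀ᶠ r in 𝓝[>] (0:ℝ),
      m (Metric.closedBall x r ∩ E) / m (Metric.closedBall x r) ≤ 1 := by
    filter_upwards [self_mem_nhdsWithin] with r hr
    exact hle1 r hr
  -- Step 3: closed-ball ratio tendsto 1
  have hcb : Filter.Tendsto
      (fun r : ℝ => m (Metric.closedBall x r ∩ E) / m (Metric.closedBall x r))
      (𝓝[>] (0:ℝ)) (𝓝 1) := by
    have hlimsup : Filter.limsup
        (fun r : ℝ => m (Metric.closedBall x r ∩ E) / m (Metric.closedBall x r))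
        (𝓝[>] (0:ℝ)) ≤ 1 := limsup_le_of_le (by isBoundedDefault) hev_le1
    have hll : L ≤ Filter.limsup
        (fun r : ℝ => m (Metric.closedBall x r ∩ E) / m (Metric.closedBall x r))
        (𝓝[>] (0:ℝ)) := liminf_le_limsup (by isBoundedDefault) (by isBoundedDefault)
    exact tendsto_of_liminf_eq_limsup
      (le_antisymm (hll.trans hlimsup) hL1)
      (le_antisymm hlimsup (hL1.trans hll))
      (by isBoundedDefault) (by isBoundedDefault)
  have hkt : (k : ℝ≥0∞) ≠ ⊤ := ENNReal.natCast_ne_top k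
  have hk0 : (k : ℝ≥0∞) ≠ 0 := by exact_mod_cast hk.ne'
  have hcb0 : ∀ r : ℝ, 0 < r → m (Metric.closedBall x r) ≠ 0 := by
    intro r hr h0
    exact hpos r hr (measure_mono_null Metric.ball_subset_closedBall h0)
  -- Step 4: complement closed-ball ratio tendsto 0
  have hcbc : Filter.Tendsto
      (fun r : ℝ => m (Metric.closedBall x r ∩ Eᶜ) / m (Metric.closedBall x r))
      (𝓝[>] (0:ℝ)) (𝓝 0) := by
    have heq : ∀ᶠ r in 𝓝[>] (0:ℝ),
        (1 : ℝ≥0∞) - m (Metric.closedBall x r ∩ E) / m (Metric.closedBall x r) =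
          m (Metric.closedBall x r ∩ Eᶜ) / m (Metric.closedBall x r) := by
      filter_upwards [self_mem_nhdsWithin] with r hr
      have h := ratio_add_compl m E (Metric.closedBall x r) hE (hcb0 r hr)
      rw [add_comm] at h
      exact (ENNReal.eq_sub_of_add_eq
        (ne_top_of_le_ne_top ENNReal.one_ne_top (hle1 r hr)) h).symm
    have h1 : Filter.Tendsto
        (fun r : ℝ => (1:ℝ≥0∞) - m (Metric.closedBall x r ∩ E) / m (Metric.closedBall x r))
        (𝓝[>] (0:ℝ)) (𝓝 (1 - 1)) :=
      ENNReal.Tendsto.sub tendsto_const_nhds hcb (Or.inl ENNReal.one_ne_top)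
    rw [tsub_self] at h1
    exact h1.congr' heq
  -- Step 5-6: complement open-ball ratio tendsto 0
  have hdivk : ∀ a b : ℝ≥0∞, a / ((k:ℝ≥0∞)⁻¹ * b) = (k:ℝ≥0∞) * (a / b) := by
    intro a b
    rw [div_eq_mul_inv, div_eq_mul_inv,
      ENNReal.mul_inv (Or.inl (ENNReal.inv_ne_zero.2 hkt)) (Or.inl (ENNReal.inv_ne_top.2 hk0)),
      inv_inv]
    ring
  have hbc : Filter.Tendsto
      (fun r : ℝ => m (Metric.ball x r ∩ Eᶜ) / m (Metric.ball x r))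
      (𝓝[>] (0:ℝ)) (𝓝 0) := by
    have hub : ∀ᶠ r in 𝓝[>] (0:ℝ),
        m (Metric.ball x r ∩ Eᶜ) / m (Metric.ball x r) ≤
          (k:ℝ≥0∞) * (m (Metric.closedBall x r ∩ Eᶜ) / m (Metric.closedBall x r)) := by
      have hmem : Set.Ioo (0:ℝ) ((k:ℝ)⁻¹/4) ∈ 𝓝[>] (0:ℝ) := by
        apply Ioo_mem_nhdsGT_of_mem
        exact ⟨le_refl _, by positivity⟩
      filter_upwards [hmem] with r hr
      have hcbk : m (Metric.closedBall x r) ≤ (k:ℝ≥0∞) * m (Metric.ball x r) := by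
        calc m (Metric.closedBall x r) ≤ m (Metric.ball x (4 * r)) :=
              measure_mono (Metric.closedBall_subset_ball (by linarith [hr.1]))
        _ ≤ (k:ℝ≥0∞) * m (Metric.ball x r) := hball4 k hk x hGx r hr.1 hr.2
      have hlb : (k:ℝ≥0∞)⁻¹ * m (Metric.closedBall x r) ≤ m (Metric.ball x r) := by
        calc (k:ℝ≥0∞)⁻¹ * m (Metric.closedBall x r)
            ≤ (k:ℝ≥0∞)⁻¹ * ((k:ℝ≥0∞) * m (Metric.ball x r)) := by gcongr
        _ = m (Metric.ball x r) := by
            rw [← mul_assoc, ENNReal.inv_mul_cancel hk0 hkt, one_mul]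
      calc m (Metric.ball x r ∩ Eᶜ) / m (Metric.ball x r)
          ≤ m (Metric.closedBall x r ∩ Eᶜ) / m (Metric.ball x r) :=
            ENNReal.div_le_div_right
              (measure_mono (Set.inter_subset_inter_left _ Metric.ball_subset_closedBall)) _
      _ ≤ m (Metric.closedBall x r ∩ Eᶜ) / ((k:ℝ≥0∞)⁻¹ * m (Metric.closedBall x r)) :=
            ENNReal.div_le_div_left hlb _
      _ = (k:ℝ≥0∞) * (m (Metric.closedBall x r ∩ Eᶜ) / m (Metric.closedBall x r)) :=
            hdivk _ _
    have hk0' : Filter.Tendsto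
        (fun r : ℝ => (k:ℝ≥0∞) * (m (Metric.closedBall x r ∩ Eᶜ) / m (Metric.closedBall x r)))
        (𝓝[>] (0:ℝ)) (𝓝 0) := by
      have := ENNReal.Tendsto.const_mul (a := (k:ℝ≥0∞)) hcbc (Or.inr hkt)
      rwa [mul_zero] at this
    exact tendsto_of_tendsto_of_tendsto_of_le_of_le' tendsto_const_nhds hk0'
      (Filter.Eventually.of_forall fun r => zero_le) hub
  -- Step 7: conclude
  have heq2 : ∀ᶠ r in 𝓝[>] (0:ℝ),
      (1 : ℝ≥0∞) - m (Metric.ball x r ∩ Eᶜ) / m (Metric.ball x r) =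
        m (Metric.ball x r ∩ E) / m (Metric.ball x r) := by
    filter_upwards [self_mem_nhdsWithin] with r hr
    have h := ratio_add_compl m Eᶜ (Metric.ball x r) hE.compl (hpos r hr)
    rw [compl_compl, add_comm] at h
    refine (ENNReal.eq_sub_of_add_eq ?_ h).symm
    refine ne_top_of_le_ne_top ENNReal.one_ne_top ?_
    apply ENNReal.div_le_of_le_mul
    rw [one_mul]
    exact measure_mono Set.inter_subset_left
  have h1 : Filter.Tendsto
      (fun r : ℝ => (1:ℝ≥0∞) - m (Metric.ball x r ∩ Eᶜ) / m (Metric.ball x r))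
      (𝓝[>] (0:ℝ)) (𝓝 (1 - 0)) :=
    ENNReal.Tendsto.sub tendsto_const_nhds hbc (Or.inl ENNReal.one_ne_top)
  rw [tsub_zero] at h1
  exact h1.congr' heq2

lemma key_compare (E : Set X) (hE : MeasurableSet E) (x : X) (f g : X → ℝ)
    (hfm : Measurable f) (hgm : Measurable g) (K : ℝ) (hK0 : 0 ≤ K)
    (hf : ∀ y, |f y - f x| ≤ K * dist y x) (hg : ∀ y, |g y - g x| ≤ K * dist y x)
    (hfg : ∀ y ∈ E, f y = g y) (hxE : x ∈ E)
    (hx : Filter.Tendsto (fun r : ℝ => m (Metric.ball x r ∩ E) / m (Metric.ball x r))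
      (𝓝[>] (0:ℝ)) (𝓝 1)) :
    Filter.Tendsto (fun r : ℝ => ksr m f r x - ksr m g r x) (𝓝[>] (0:ℝ)) (𝓝 0) := by
  -- eventually the ball has positive measure
  have hpos : ∀ᶠ r : ℝ in 𝓝[>] (0:ℝ), m (Metric.ball x r) ≠ 0 := by
    have h12 : ∀ᶠ r : ℝ in 𝓝[>] (0:ℝ),
        (1/2 : ℝ≥0∞) < m (Metric.ball x r ∩ E) / m (Metric.ball x r) :=
      hx.eventually (eventually_gt_nhds (by norm_num))
    filter_upwards [h12] with r hr h0
    have hnum : m (Metric.ball x r ∩ E) = 0 :=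
      measure_mono_null Set.inter_subset_left h0
    rw [h0, hnum, ENNReal.zero_div] at hr
    exact absurd hr (by simp)
  -- complement ratio tendsto 0
  have hratio_le : ∀ r : ℝ, m (Metric.ball x r) ≠ 0 →
      m (Metric.ball x r ∩ E) / m (Metric.ball x r) ≤ 1 := by
    intro r hr
    apply ENNReal.div_le_of_le_mul
    rw [one_mul]; exact measure_mono Set.inter_subset_left
  have hcomp : Filter.Tendsto
      (fun r : ℝ => m (Metric.ball x r ∩ Eᶜ) / m (Metric.ball x r)) (𝓝[>] (0:ℝ)) (𝓝 0) := by
    have heq : ∀ᶠ r in 𝓝[>] (0:ℝ),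
        (1:ℝ≥0∞) - m (Metric.ball x r ∩ E) / m (Metric.ball x r) =
          m (Metric.ball x r ∩ Eᶜ) / m (Metric.ball x r) := by
      filter_upwards [hpos] with r hr
      have h := ratio_add_compl m E (Metric.ball x r) hE hr
      rw [add_comm] at h
      exact (ENNReal.eq_sub_of_add_eq
        (ne_top_of_le_ne_top ENNReal.one_ne_top (hratio_le r hr)) h).symm
    have h1 := ENNReal.Tendsto.sub (tendsto_const_nhds (x := (1:ℝ≥0∞))) hx
      (Or.inl ENNReal.one_ne_top)
    rw [tsub_self] at h1
    exact h1.congr' heq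
  -- real-valued complement density
  set δ : ℝ → ℝ := fun r => (m (Metric.ball x r ∩ Eᶜ) / m (Metric.ball x r)).toReal with hδdef
  have hδ : Filter.Tendsto δ (𝓝[>] (0:ℝ)) (𝓝 0) := by
    have := (ENNReal.tendsto_toReal (a := 0) (by simp)).comp hcomp
    simp at this; exact this
  -- the squeeze bound
  have hbound : ∀ᶠ r : ℝ in 𝓝[>] (0:ℝ),
      ‖ksr m f r x - ksr m g r x‖ ≤ Real.sqrt (2 * K^2 * δ r) := by
    filter_upwards [hpos, self_mem_nhdsWithin] with r hm0 hr0
    have hr0' : (0:ℝ) < r := hr0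
    set F : X → ℝ := fun y => ((f y - f x) / r) ^ 2 with hF
    set G : X → ℝ := fun y => ((g y - g x) / r) ^ 2 with hG
    have hFb : ∀ y ∈ Metric.ball x r, F y ≤ K ^ 2 := by
      intro y hy
      have hd : dist y x < r := Metric.mem_ball.1 hy
      have h1 : |f y - f x| ≤ K * r :=
        (hf y).trans (mul_le_mul_of_nonneg_left hd.le hK0)
      have h2 : (f y - f x)^2 ≤ (K*r)^2 := sq_le_sq' (by linarith [(abs_le.1 h1).1]) (abs_le.1 h1).2
      show ((f y - f x) / r) ^ 2 ≤ K ^ 2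
      rw [div_pow, div_le_iff₀ (by positivity)]
      nlinarith
    have hGb : ∀ y ∈ Metric.ball x r, G y ≤ K ^ 2 := by
      intro y hy
      have hd : dist y x < r := Metric.mem_ball.1 hy
      have h1 : |g y - g x| ≤ K * r :=
        (hg y).trans (mul_le_mul_of_nonneg_left hd.le hK0)
      have h2 : (g y - g x)^2 ≤ (K*r)^2 := sq_le_sq' (by linarith [(abs_le.1 h1).1]) (abs_le.1 h1).2
      show ((g y - g x) / r) ^ 2 ≤ K ^ 2
      rw [div_pow, div_le_iff₀ (by positivity)]
      nlinarith
    have hFmeas : Measurable F := ((hfm.sub measurable_const).div_const r).pow_const 2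
    have hGmeas : Measurable G := ((hgm.sub measurable_const).div_const r).pow_const 2
    have hFint : IntegrableOn F (Metric.ball x r) m := by
      refine Integrable.mono' (integrable_const (K^2)) hFmeas.aestronglyMeasurable ?_
      rw [ae_restrict_iff' measurableSet_ball]
      exact Filter.Eventually.of_forall fun y hy => by
        rw [Real.norm_eq_abs, abs_of_nonneg (by positivity)]; exact hFb y hy
    have hGint : IntegrableOn G (Metric.ball x r) m := by
      refine Integrable.mono' (integrable_const (K^2)) hGmeas.aestronglyMeasurable ?_
      rw [ae_restrict_iff' measurableSet_ball]
      exact Filter.Eventually.of_forall fun y hy => by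
        rw [Real.norm_eq_abs, abs_of_nonneg (by positivity)]; exact hGb y hy
    -- difference bound by indicator
    have hdiff : ∀ y ∈ Metric.ball x r, |F y - G y| ≤ Set.indicator Eᶜ (fun _ => 2 * K^2) y := by
      intro y hy
      by_cases hyE : y ∈ E
      · have : F y = G y := by
          show ((f y - f x) / r) ^ 2 = ((g y - g x) / r) ^ 2
          rw [hfg y hyE, hfg x hxE]
        rw [this, sub_self, abs_zero]
        exact Set.indicator_nonneg (fun _ _ => by positivity) y
      · rw [Set.indicator_of_mem (Set.mem_compl hyE)]
        have h1 : (0:ℝ) ≤ F y := by positivity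
        have h2 : (0:ℝ) ≤ G y := by positivity
        rw [abs_sub_le_iff]
        constructor
        · linarith [hFb y hy]
        · linarith [hGb y hy]
    have hindint : IntegrableOn (Set.indicator Eᶜ (fun _ => 2 * K^2)) (Metric.ball x r) m :=
      (integrable_const (2*K^2)).indicator hE.compl
    -- integral estimate
    have hint : |∫ y in Metric.ball x r, (F y - G y) ∂m| ≤
        2 * K^2 * (m (Metric.ball x r ∩ Eᶜ)).toReal := by
      calc |∫ y in Metric.ball x r, (F y - G y) ∂m|
          ≤ ∫ y in Metric.ball x r, |F y - G y| ∂m := by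
            have := norm_integral_le_integral_norm (μ := m.restrict (Metric.ball x r))
              (f := fun y => F y - G y)
            simpa [Real.norm_eq_abs] using this
      _ ≤ ∫ y in Metric.ball x r, Set.indicator Eᶜ (fun _ => 2 * K^2) y ∂m := by
            apply setIntegral_mono_on (hFint.sub hGint).abs hindint measurableSet_ball
            exact hdiff
      _ = ∫ y in Metric.ball x r ∩ Eᶜ, (2 * K^2) ∂m := by
            rw [setIntegral_indicator hE.compl]
      _ = (m (Metric.ball x r ∩ Eᶜ)).toReal * (2 * K^2) := by
            rw [setIntegral_const, smul_eq_mul]; rfl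
      _ = 2 * K^2 * (m (Metric.ball x r ∩ Eᶜ)).toReal := by ring
    -- averages
    set A := ⨍ y in Metric.ball x r, F y ∂m with hA
    set B := ⨍ y in Metric.ball x r, G y ∂m with hB
    have hAnn : 0 ≤ A := by
      rw [hA, setAverage_eq]
      apply smul_nonneg (by positivity)
      apply integral_nonneg
      intro y; positivity
    have hBnn : 0 ≤ B := by
      rw [hB, setAverage_eq]
      apply smul_nonneg (by positivity)
      apply integral_nonneg
      intro y; positivity
    have hABdiff : |A - B| ≤ 2 * K^2 * δ r := by
      rw [hA, hB, setAverage_eq, setAverage_eq, smul_eq_mul, smul_eq_mul, ← mul_sub,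
        ← integral_sub hFint hGint, abs_mul, abs_of_nonneg (by positivity)]
      calc (m (Metric.ball x r)).toReal⁻¹ * |∫ y in Metric.ball x r, (F y - G y) ∂m|
          ≤ (m (Metric.ball x r)).toReal⁻¹ * (2 * K^2 * (m (Metric.ball x r ∩ Eᶜ)).toReal) := by
            apply mul_le_mul_of_nonneg_left hint (by positivity)
      _ = 2 * K^2 * δ r := by
          have hδr : δ r = (m (Metric.ball x r ∩ Eᶜ)).toReal / (m (Metric.ball x r)).toReal :=
            ENNReal.toReal_div _ _
          rw [hδr]
          ring
    -- conclude
    rw [Real.norm_eq_abs]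
    calc |ksr m f r x - ksr m g r x| ≤ Real.sqrt |A - B| := by
          rw [show ksr m f r x = Real.sqrt A from rfl, show ksr m g r x = Real.sqrt B from rfl]
          exact aux_sqrt_abs_sub A B hAnn hBnn
    _ ≤ Real.sqrt (2 * K^2 * δ r) := Real.sqrt_le_sqrt hABdiff
  -- the squeeze
  have hsq : Filter.Tendsto (fun r : ℝ => Real.sqrt (2 * K^2 * δ r)) (𝓝[>] (0:ℝ)) (𝓝 0) := by
    have h1 : Filter.Tendsto (fun r : ℝ => 2 * K^2 * δ r) (𝓝[>] (0:ℝ)) (𝓝 (2 * K^2 * 0)) :=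
      hδ.const_mul _
    rw [mul_zero] at h1
    have h2 := (Real.continuous_sqrt.tendsto 0).comp h1
    simp at h2; exact h2
  exact squeeze_zero_norm' hbound hsq

end AuxKS

theorem stmt_17 {X : Type*} [MetricSpace X] [CompleteSpace X]
    [TopologicalSpace.SeparableSpace X] [MeasurableSpace X] [BorelSpace X]
    (m : Measure X) [IsFiniteMeasure m] (Nb : ℕ)
    (hLM : LocallyMinkowski m Nb)
    (hdoub : LocDoubling m) (hpoin : SupportsPoincare m)
    (f₁ f₂ : X → ℝ) (K₁ K₂ : ℝ≥0)
    (h₁ : LipschitzWith K₁ f₁) (h₂ : LipschitzWith K₂ f₂)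
    (hks₁ : KsLeOne m f₁) (hks₂ : KsLeOne m f₂) :
    ((∃ K : ℝ≥0, LipschitzWith K fun x => max (f₁ x) (f₂ x)) ∧
     (∃ K : ℝ≥0, LipschitzWith K fun x => min (f₁ x) (f₂ x)) ∧
     KsLeOne m (fun x => max (f₁ x) (f₂ x)) ∧
     KsLeOne m (fun x => min (f₁ x) (f₂ x))) ∧
    -- key computation: at density points of {f₁ ≥ f₂} where the limits exist,
    -- the potentials of max{f₁,f₂} and of f₁ coincide
    (∀ (x : X) (a b : ℝ),
      Filter.Tendsto
        (fun r => m (Metric.ball x r ∩ {y | f₂ y ≤ f₁ y}) / m (Metric.ball x r))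
        (𝓝[>] (0:ℝ)) (𝓝 1) →
      Filter.Tendsto (fun r => ksr m (fun y => max (f₁ y) (f₂ y)) r x)
        (𝓝[>] (0:ℝ)) (𝓝 a) →
      Filter.Tendsto (fun r => ksr m f₁ r x) (𝓝[>] (0:ℝ)) (𝓝 b) →
      a = b) := by
  classical
  have hm1 : Measurable f₁ := h₁.continuous.measurable
  have hm2 : Measurable f₂ := h₂.continuous.measurable
  set K : ℝ := max (K₁ : ℝ) (K₂ : ℝ) with hK
  have hK0 : 0 ≤ K := le_max_of_le_left K₁.coe_nonneg
  have hl1 : ∀ z y : X, |f₁ y - f₁ z| ≤ K * dist y z := by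
    intro z y
    have h := h₁.dist_le_mul y z
    rw [Real.dist_eq] at h
    exact h.trans (mul_le_mul_of_nonneg_right (le_max_left _ _) dist_nonneg)
  have hl2 : ∀ z y : X, |f₂ y - f₂ z| ≤ K * dist y z := by
    intro z y
    have h := h₂.dist_le_mul y z
    rw [Real.dist_eq] at h
    exact h.trans (mul_le_mul_of_nonneg_right (le_max_right _ _) dist_nonneg)
  have hlmax : ∀ z y : X, |max (f₁ y) (f₂ y) - max (f₁ z) (f₂ z)| ≤ K * dist y z := by
    intro z y
    calc |max (f₁ y) (f₂ y) - max (f₁ z) (f₂ z)| ≤ max |f₁ y - f₁ z| |f₂ y - f₂ z| :=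
          abs_max_sub_max_le_max _ _ _ _
    _ ≤ K * dist y z := max_le (hl1 z y) (hl2 z y)
  have hlmin : ∀ z y : X, |min (f₁ y) (f₂ y) - min (f₁ z) (f₂ z)| ≤ K * dist y z := by
    intro z y
    calc |min (f₁ y) (f₂ y) - min (f₁ z) (f₂ z)| ≤ max |f₁ y - f₁ z| |f₂ y - f₂ z| :=
          abs_min_sub_min_le_max _ _ _ _
    _ ≤ K * dist y z := max_le (hl1 z y) (hl2 z y)
  have hEclosed : IsClosed {y : X | f₂ y ≤ f₁ y} := isClosed_le h₂.continuous h₁.continuous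
  have hEmeas : MeasurableSet {y : X | f₂ y ≤ f₁ y} := hEclosed.measurableSet
  have hE'closed : IsClosed {y : X | f₁ y ≤ f₂ y} := isClosed_le h₁.continuous h₂.continuous
  have hE'meas : MeasurableSet {y : X | f₁ y ≤ f₂ y} := hE'closed.measurableSet
  -- the density machinery
  have hG : ∀ᵐ x ∂m, ∃ k : ℕ, 0 < k ∧ x ∈ Gset m k := ae_mem_Gset m Nb hLM
  have hN := aux_null_nonsupport m
  have hball4 : ∀ (k : ℕ), 0 < k → ∀ x ∈ Gset m k, ∀ r : ℝ, 0 < r → r < (k:ℝ)⁻¹/4 →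
      m (Metric.ball x (4 * r)) ≤ (k : ℝ≥0∞) * m (Metric.ball x r) :=
    fun k hk x hx r hr hr' => Gset_ball4 m hk hx hr hr'
  have hdA : ∀ (E : Set X) (k : ℕ), 0 < k → ∀ ρ : ℝ≥0∞, ρ < 1 →
      m {x | x ∈ E ∧ x ∈ Gset m k ∧
        Filter.liminf (fun r : ℝ => m (Metric.closedBall x r ∩ E) / m (Metric.closedBall x r))
          (𝓝[>] (0:ℝ)) < ρ} = 0 :=
    fun E k hk ρ hρ => densA m E k hk ρ hρ
      (fun x hx r hr hr' => Gset_closedBall_doubling m hk hx hr hr')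
  have hdensE : ∀ᵐ x ∂m, x ∈ {y : X | f₂ y ≤ f₁ y} → Filter.Tendsto
      (fun r : ℝ => m (Metric.ball x r ∩ {y : X | f₂ y ≤ f₁ y}) / m (Metric.ball x r))
      (𝓝[>] (0:ℝ)) (𝓝 1) := densB m hG hN hball4 hdA _ hEmeas
  have hdensE' : ∀ᵐ x ∂m, x ∈ {y : X | f₁ y ≤ f₂ y} → Filter.Tendsto
      (fun r : ℝ => m (Metric.ball x r ∩ {y : X | f₁ y ≤ f₂ y}) / m (Metric.ball x r))
      (𝓝[>] (0:ℝ)) (𝓝 1) := densB m hG hN hball4 hdA _ hE'meas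
  -- key limit transfers
  have keyE : ∀ (x : X), x ∈ {y : X | f₂ y ≤ f₁ y} →
      Filter.Tendsto
        (fun r : ℝ => m (Metric.ball x r ∩ {y : X | f₂ y ≤ f₁ y}) / m (Metric.ball x r))
        (𝓝[>] (0:ℝ)) (𝓝 1) →
      Filter.Tendsto (fun r : ℝ =>
        ksr m (fun y => max (f₁ y) (f₂ y)) r x - ksr m f₁ r x) (𝓝[>] (0:ℝ)) (𝓝 0) := by
    intro x hxE hdens
    exact key_compare m _ hEmeas x _ f₁ (hm1.max hm2) hm1 K hK0
      (fun y => hlmax x y) (fun y => hl1 x y)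
      (fun y hy => max_eq_left hy) hxE hdens
  have keyE's : ∀ (x : X), x ∈ {y : X | f₁ y ≤ f₂ y} →
      Filter.Tendsto
        (fun r : ℝ => m (Metric.ball x r ∩ {y : X | f₁ y ≤ f₂ y}) / m (Metric.ball x r))
        (𝓝[>] (0:ℝ)) (𝓝 1) →
      Filter.Tendsto (fun r : ℝ =>
        ksr m (fun y => max (f₁ y) (f₂ y)) r x - ksr m f₂ r x) (𝓝[>] (0:ℝ)) (𝓝 0) := by
    intro x hxE hdens
    exact key_compare m _ hE'meas x _ f₂ (hm1.max hm2) hm2 K hK0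
      (fun y => hlmax x y) (fun y => hl2 x y)
      (fun y hy => max_eq_right hy) hxE hdens
  have keyEmin : ∀ (x : X), x ∈ {y : X | f₂ y ≤ f₁ y} →
      Filter.Tendsto
        (fun r : ℝ => m (Metric.ball x r ∩ {y : X | f₂ y ≤ f₁ y}) / m (Metric.ball x r))
        (𝓝[>] (0:ℝ)) (𝓝 1) →
      Filter.Tendsto (fun r : ℝ =>
        ksr m (fun y => min (f₁ y) (f₂ y)) r x - ksr m f₂ r x) (𝓝[>] (0:ℝ)) (𝓝 0) := by
    intro x hxE hdens
    exact key_compare m _ hEmeas x _ f₂ (hm1.min hm2) hm2 K hK0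
      (fun y => hlmin x y) (fun y => hl2 x y)
      (fun y hy => min_eq_right hy) hxE hdens
  have keyE'min : ∀ (x : X), x ∈ {y : X | f₁ y ≤ f₂ y} →
      Filter.Tendsto
        (fun r : ℝ => m (Metric.ball x r ∩ {y : X | f₁ y ≤ f₂ y}) / m (Metric.ball x r))
        (𝓝[>] (0:ℝ)) (𝓝 1) →
      Filter.Tendsto (fun r : ℝ =>
        ksr m (fun y => min (f₁ y) (f₂ y)) r x - ksr m f₁ r x) (𝓝[>] (0:ℝ)) (𝓝 0) := by
    intro x hxE hdens
    exact key_compare m _ hE'meas x _ f₁ (hm1.min hm2) hm1 K hK0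
      (fun y => hlmin x y) (fun y => hl1 x y)
      (fun y hy => min_eq_left hy) hxE hdens
  constructor
  · refine ⟨⟨K₁ ⊔ K₂, h₁.max h₂⟩, ⟨K₁ ⊔ K₂, h₁.min h₂⟩, ?_, ?_⟩
    · -- KsLeOne for the max
      unfold KsLeOne
      filter_upwards [hks₁, hks₂, hdensE, hdensE'] with x hx1 hx2 hdE hdE'
      obtain ⟨b₁, hb₁, hb₁le⟩ := hx1
      obtain ⟨b₂, hb₂, hb₂le⟩ := hx2
      rcases le_total (f₂ x) (f₁ x) with hc | hc
      · have hdiff := keyE x hc (hdE hc)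
        refine ⟨b₁, ?_, hb₁le⟩
        have h := hdiff.add hb₁
        rw [zero_add] at h
        refine h.congr fun r => ?_
        ring
      · have hdiff := keyE's x hc (hdE' hc)
        refine ⟨b₂, ?_, hb₂le⟩
        have h := hdiff.add hb₂
        rw [zero_add] at h
        refine h.congr fun r => ?_
        ring
    · -- KsLeOne for the min
      unfold KsLeOne
      filter_upwards [hks₁, hks₂, hdensE, hdensE'] with x hx1 hx2 hdE hdE'
      obtain ⟨b₁, hb₁, hb₁le⟩ := hx1
      obtain ⟨b₂, hb₂, hb₂le⟩ := hx2
      rcases le_total (f₂ x) (f₁ x) with hc | hc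
      · have hdiff := keyEmin x hc (hdE hc)
        refine ⟨b₂, ?_, hb₂le⟩
        have h := hdiff.add hb₂
        rw [zero_add] at h
        refine h.congr fun r => ?_
        ring
      · have hdiff := keyE'min x hc (hdE' hc)
        refine ⟨b₁, ?_, hb₁le⟩
        have h := hdiff.add hb₁
        rw [zero_add] at h
        refine h.congr fun r => ?_
        ring
  · -- the key computation
    intro x a b hdens hmax h1
    have hxE : x ∈ {y : X | f₂ y ≤ f₁ y} := by
      rw [← hEclosed.closure_eq]
      rw [Metric.mem_closure_iff]
      intro ε hε
      have hev : ∀ᶠ r : ℝ in 𝓝[>] (0:ℝ),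
          (1/2 : ℝ≥0∞) < m (Metric.ball x r ∩ {y : X | f₂ y ≤ f₁ y}) / m (Metric.ball x r) :=
        hdens.eventually (eventually_gt_nhds (by norm_num))
      have hev2 : Set.Ioo (0:ℝ) ε ∈ 𝓝[>] (0:ℝ) :=
        Ioo_mem_nhdsGT_of_mem ⟨le_refl _, hε⟩
      obtain ⟨r, hr1, hr2⟩ := (hev.and hev2).exists
      have hne : m (Metric.ball x r ∩ {y : X | f₂ y ≤ f₁ y}) ≠ 0 := by
        intro h0
        rw [h0, ENNReal.zero_div] at hr1
        exact absurd hr1 (by simp)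
      obtain ⟨y, hy⟩ := nonempty_of_measure_ne_zero hne
      refine ⟨y, hy.2, ?_⟩
      have : dist y x < r := Metric.mem_ball.1 hy.1
      rw [dist_comm]
      exact this.trans hr2.2
    have hdiff := keyE x hxE hdens
    have h := hdiff.add h1
    rw [zero_add] at h
    have h2 : Filter.Tendsto (fun r : ℝ => ksr m (fun y => max (f₁ y) (f₂ y)) r x)
        (𝓝[>] (0:ℝ)) (𝓝 b) := by
      refine h.congr fun r => ?_
      ring
    exact tendsto_nhds_unique hmax h2
end
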